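/- Let d ∈ ℕ, let f : ℝ^d → ℝ be continuously differentiable, and fix y ∈ ℝ^d. Then the vector field F : ℝ^d → ℝ^d defined by F(x) = ∫_0^1 f(x + (θ−1)y) f(x + θy) · y dθ is differentiable, and its divergence satisfies ∇_x · F(x) = − f(x) ( f(x − y) − f(x + y) ) for every x ∈ ℝ^d. -/

import Mathlib

open MeasureTheory Metric

theorem stmt18 (d : ℕ) (f : EuclideanSpace ℝ (Fin d) → ℝ)
    (hf : ContDiff ℝ 1 f) (y : EuclideanSpace ℝ (Fin d)) :
    Differentiable ℝ (fun x : EuclideanSpace ℝ (Fin d) =>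
      ∫ θ in Set.Icc (0 : ℝ) 1, (f (x + (θ - 1) • y) * f (x + θ • y)) • y) ∧
    ∀ x : EuclideanSpace ℝ (Fin d),
      (∑ i : Fin d,
        fderiv ℝ (fun x : EuclideanSpace ℝ (Fin d) =>
          ∫ θ in Set.Icc (0 : ℝ) 1, (f (x + (θ - 1) • y) * f (x + θ • y)) • y) x
          (EuclideanSpace.single i 1) i) =
      -(f x * (f (x - y) - f (x + y))) := by
  set φ : EuclideanSpace ℝ (Fin d) → ℝ := fun z => f (z - y) * f z with hφdef
  have h1 : ContDiff ℝ 1 (fun z : EuclideanSpace ℝ (Fin d) => f (z - y)) :=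
    hf.comp (contDiff_id.sub contDiff_const)
  have hφ : ContDiff ℝ 1 φ := h1.mul hf
  have hpt : ∀ (x : EuclideanSpace ℝ (Fin d)) (θ : ℝ), x + (θ - 1) • y = x + θ • y - y := by
    intro x θ
    rw [sub_smul, one_smul, ← add_sub_assoc]
  have hfun : (fun x : EuclideanSpace ℝ (Fin d) =>
        ∫ θ in Set.Icc (0 : ℝ) 1, (f (x + (θ - 1) • y) * f (x + θ • y)) • y)
      = fun x : EuclideanSpace ℝ (Fin d) => (∫ θ in Set.Icc (0 : ℝ) 1, φ (x + θ • y)) • y := by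
    funext x
    rw [← integral_smul_const]
    refine integral_congr_ae (Filter.Eventually.of_forall fun θ => ?_)
    simp only [hφdef, add_sub_cancel_right, hpt]
  have hderivx : ∀ (x : EuclideanSpace ℝ (Fin d)) (θ : ℝ),
      HasFDerivAt (fun x : EuclideanSpace ℝ (Fin d) => φ (x + θ • y))
      (fderiv ℝ φ (x + θ • y)) x := by
    intro x θ
    have h1 : HasFDerivAt (fun x : EuclideanSpace ℝ (Fin d) => x + θ • y)
        (ContinuousLinearMap.id ℝ (EuclideanSpace ℝ (Fin d))) x :=
      (hasFDerivAt_id x).add_const (θ • y)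
    have h2 := ((hφ.differentiable one_ne_zero) (x + θ • y)).hasFDerivAt
    simpa [Function.comp_def] using h2.comp x h1
  have hcont_fd : Continuous (fderiv ℝ φ) := hφ.continuous_fderiv one_ne_zero
  have hshift : ∀ x : EuclideanSpace ℝ (Fin d),
      Continuous (fun θ : ℝ => x + θ • y) := fun x =>
    continuous_const.add (continuous_id.smul continuous_const)
  have key : ∀ x₀ : EuclideanSpace ℝ (Fin d),
      HasFDerivAt (fun x : EuclideanSpace ℝ (Fin d) => ∫ θ in Set.Icc (0 : ℝ) 1, φ (x + θ • y))
      ((∫ θ in Set.Icc (0 : ℝ) 1, fderiv ℝ φ (x₀ + θ • y))) x₀ := by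
    intro x₀
    obtain ⟨C, hC⟩ := (isCompact_closedBall x₀ (1 + ‖y‖)).exists_bound_of_continuousOn
      hcont_fd.continuousOn
    have hmem : ∀ x ∈ ball x₀ 1, ∀ θ ∈ Set.Icc (0 : ℝ) 1,
        x + θ • y ∈ closedBall x₀ (1 + ‖y‖) := by
      intro x hx θ hθ
      rw [mem_closedBall]
      calc dist (x + θ • y) x₀ ≤ dist (x + θ • y) x + dist x x₀ := dist_triangle _ _ _
        _ ≤ ‖y‖ + 1 := by
            gcongr
            · rw [dist_eq_norm, add_sub_cancel_left, norm_smul, Real.norm_eq_abs,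
                abs_of_nonneg hθ.1]
              exact mul_le_of_le_one_left (norm_nonneg y) hθ.2
            · exact le_of_lt (mem_ball.mp hx)
        _ = 1 + ‖y‖ := by ring
    exact hasFDerivAt_integral_of_dominated_of_fderiv_le (𝕜 := ℝ)
      (μ := volume.restrict (Set.Icc (0:ℝ) 1))
      (F := fun x θ => φ (x + θ • y))
      (F' := fun x θ => fderiv ℝ φ (x + θ • y))
      (bound := fun _ => C) (s := ball x₀ 1) (ball_mem_nhds x₀ one_pos)
      (Filter.Eventually.of_forall fun x =>
        ((hφ.continuous.comp (hshift x)).aestronglyMeasurable).restrict)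
      ((hφ.continuous.comp (hshift x₀)).integrableOn_Icc)
      (((hcont_fd.comp (hshift x₀)).aestronglyMeasurable).restrict)
      ((ae_restrict_mem measurableSet_Icc).mono fun θ hθ x hx => hC _ (hmem x hx θ hθ))
      (integrableOn_const (by simp [Real.volume_Icc]))
      (Filter.Eventually.of_forall fun θ x _ => hderivx x θ)
  have hdiff : Differentiable ℝ (fun x : EuclideanSpace ℝ (Fin d) =>
      ∫ θ in Set.Icc (0 : ℝ) 1, φ (x + θ • y)) := fun x => (key x).differentiableAt
  constructor
  · rw [hfun]
    exact hdiff.smul_const y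
  · intro x
    have hF : HasFDerivAt (fun x : EuclideanSpace ℝ (Fin d) =>
        ∫ θ in Set.Icc (0 : ℝ) 1, (f (x + (θ - 1) • y) * f (x + θ • y)) • y)
        ((∫ θ in Set.Icc (0 : ℝ) 1, fderiv ℝ φ (x + θ • y)).smulRight y) x := by
      rw [hfun]
      exact (key x).smul_const y
    rw [hF.fderiv]
    have hint : IntegrableOn (fun θ : ℝ => fderiv ℝ φ (x + θ • y)) (Set.Icc (0:ℝ) 1) :=
      (hcont_fd.comp (hshift x)).integrableOn_Icc
    have happ : (∫ θ in Set.Icc (0 : ℝ) 1, fderiv ℝ φ (x + θ • y)) y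
        = ∫ θ in Set.Icc (0 : ℝ) 1, fderiv ℝ φ (x + θ • y) y :=
      ContinuousLinearMap.integral_apply hint y
    set L := ∫ θ in Set.Icc (0 : ℝ) 1, fderiv ℝ φ (x + θ • y) with hL
    have hsum : (∑ i : Fin d, (L.smulRight y) (EuclideanSpace.single i 1) i) = L y := by
      have hy : (∑ i : Fin d, y i • (EuclideanSpace.single i (1:ℝ) :
          EuclideanSpace ℝ (Fin d))) = y := by
        ext j
        classical
        rw [WithLp.ofLp_sum, Finset.sum_apply]
        simp [EuclideanSpace.single_apply]
      calc (∑ i : Fin d, (L.smulRight y) (EuclideanSpace.single i 1) i)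
          = ∑ i : Fin d, (L (EuclideanSpace.single i 1)) * y i := by
            simp [ContinuousLinearMap.smulRight_apply]
        _ = L (∑ i : Fin d, y i • (EuclideanSpace.single i (1:ℝ) :
              EuclideanSpace ℝ (Fin d))) := by
            rw [map_sum]
            refine Finset.sum_congr rfl fun i _ => ?_
            rw [_root_.map_smul]
            simp [mul_comm]
        _ = L y := by rw [hy]
    rw [hsum, happ]
    have hu : ∀ θ : ℝ, HasDerivAt (fun θ : ℝ => φ (x + θ • y))
        (fderiv ℝ φ (x + θ • y) y) θ := by
      intro θ
      have h1 : HasDerivAt (fun θ : ℝ => x + θ • y) y θ := by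
        simpa using ((hasDerivAt_id θ).smul_const y).const_add x
      exact (((hφ.differentiable one_ne_zero) (x + θ • y)).hasFDerivAt).comp_hasDerivAt θ h1
    have hcont : Continuous fun θ : ℝ => fderiv ℝ φ (x + θ • y) y :=
      (hcont_fd.comp (hshift x)).clm_apply continuous_const
    have hIcc : (∫ θ in Set.Icc (0:ℝ) 1, fderiv ℝ φ (x + θ • y) y)
        = ∫ θ in (0:ℝ)..1, fderiv ℝ φ (x + θ • y) y := by
      rw [intervalIntegral.integral_of_le zero_le_one, integral_Icc_eq_integral_Ioc]
    have hFTC : (∫ θ in Set.Icc (0:ℝ) 1, fderiv ℝ φ (x + θ • y) y)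
        = -(f x * (f (x - y) - f (x + y))) := by
      rw [hIcc, intervalIntegral.integral_eq_sub_of_hasDerivAt (fun θ _ => hu θ)
        (hcont.intervalIntegrable 0 1)]
      simp only [hφdef, one_smul, zero_smul, add_zero, add_sub_cancel_right]
      ring
    rw [hFTC]
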